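/- arXiv:1505.04764 — 2 statements merged into one kernel-verified Lean document; each statement's English description precedes it below -/
import Mathlib

section
/- Let γ > −1, b > 0, and σ ∈ (0, 1). Then lim_{x→∞} φ(x) / (φ(σx) · σ^{γ} · exp(−(2b/(1+γ))(1 − σ^{1+γ}) x^{1+γ})) = 1; that is, φ(x)/φ(σx) ∼ σ^{γ} exp(−(2b/(1+γ))(1 − σ^{1+γ}) x^{1+γ}) as x → ∞. -/
open Real Set Filter MeasureTheory Topology

lemma aux_int {c p s : ℝ} (hc : 0 < c) (hp : 0 < p) (hs : -1 < s) :
    IntegrableOn (fun t : ℝ => t ^ s * Real.exp (-c * t ^ p)) (Ioi 0) := by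
  have hs' : (-1 : ℝ) < (s + 1) / p - 1 := by
    have : 0 < (s + 1) / p := div_pos (by linarith) hp
    linarith
  have h1 : IntegrableOn (fun u : ℝ => u ^ ((s + 1) / p - 1) * Real.exp (-c * u ^ (1 : ℝ)))
      (Ioi 0) := integrableOn_rpow_mul_exp_neg_mul_rpow hs' one_pos hc
  have h2 := (integrableOn_Ioi_comp_rpow_iff' _ hp.ne').mpr h1
  refine h2.congr_fun (fun x hx => ?_) measurableSet_Ioi
  have hx0 : (0 : ℝ) < x := hx
  have e1 : (x ^ p) ^ ((s + 1) / p - 1) = x ^ (s + 1 - p) := by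
    rw [← Real.rpow_mul hx0.le]; congr 1; field_simp
  beta_reduce
  rw [smul_eq_mul, Real.rpow_one, e1, ← mul_assoc, ← Real.rpow_add hx0]
  ring_nf

lemma aux_intf {c p : ℝ} (hc : 0 < c) (hp : 0 < p) {x : ℝ} (hx : 0 < x) :
    IntegrableOn (fun t : ℝ => Real.exp (-c * t ^ p)) (Ioi x) := by
  have h := (aux_int hc hp (s := 0) (by norm_num)).mono (Ioi_subset_Ioi hx.le) le_rfl
  simpa using h

lemma aux_inth {c p : ℝ} (hc : 0 < c) (hp : 0 < p) {x : ℝ} (hx : 0 < x) :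
    IntegrableOn (fun t : ℝ => t ^ (-p) * Real.exp (-c * t ^ p)) (Ioi x) := by
  refine Integrable.mono ((aux_intf hc hp hx).const_mul (x ^ (-p))) ?_ ?_
  · refine ContinuousOn.aestronglyMeasurable ?_ measurableSet_Ioi
    refine ContinuousOn.mul ?_ ?_
    · exact continuousOn_id.rpow_const fun t ht => Or.inl (ne_of_gt (lt_trans hx ht))
    · exact (Real.continuous_exp.comp_continuousOn
        ((continuousOn_id.rpow_const fun t ht => Or.inl (ne_of_gt (lt_trans hx ht))).const_smul (-c)))
  · refine (ae_restrict_iff' measurableSet_Ioi).2 (ae_of_all _ fun t ht => ?_)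
    have ht0 : 0 < t := lt_trans hx ht
    rw [Real.norm_eq_abs, Real.norm_eq_abs, abs_of_nonneg (by positivity),
      abs_of_nonneg (by positivity)]
    exact mul_le_mul_of_nonneg_right
      (Real.rpow_le_rpow_of_nonpos hx (le_of_lt ht) (by linarith)) (Real.exp_pos _).le

lemma aux_phi_pos {c p : ℝ} (hc : 0 < c) (hp : 0 < p) {x : ℝ} (hx : 0 < x) :
    0 < ∫ t in Ioi x, Real.exp (-c * t ^ p) := by
  rw [setIntegral_pos_iff_support_of_nonneg_ae
      (ae_of_all _ fun t => (Real.exp_pos _).le) (aux_intf hc hp hx)]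
  have : (Function.support fun t : ℝ => Real.exp (-c * t ^ p)) = univ := by
    ext t; simp [Function.support, (Real.exp_pos _).ne']
  rw [this, univ_inter]
  simp [hx]

lemma aux_deriv {c p : ℝ} (hc : 0 < c) (hp : 0 < p) {t : ℝ} (ht0 : 0 < t) :
    HasDerivAt (fun t : ℝ => Real.exp (-c * t ^ p) * t ^ (1 - p) / (c * p))
      (-(Real.exp (-c * t ^ p) + ((p - 1) / (c * p)) * (t ^ (-p) * Real.exp (-c * t ^ p)))) t := by
  have d1 : HasDerivAt (fun t : ℝ => t ^ p) (p * t ^ (p - 1)) t :=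
    Real.hasDerivAt_rpow_const (Or.inl ht0.ne')
  have d3 : HasDerivAt (fun t : ℝ => Real.exp (-c * t ^ p))
      (Real.exp (-c * t ^ p) * (-c * (p * t ^ (p - 1)))) t := (d1.const_mul (-c)).exp
  have d4 : HasDerivAt (fun t : ℝ => t ^ (1 - p)) ((1 - p) * t ^ (1 - p - 1)) t :=
    Real.hasDerivAt_rpow_const (Or.inl ht0.ne')
  have d5 := (d3.mul d4).div_const (c * p)
  refine d5.congr_deriv ?_
  symm
  have e1 : t ^ (p - 1) * t ^ (1 - p) = 1 := by
    rw [← Real.rpow_add ht0]; norm_num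
  have e2 : t ^ (1 - p - 1) = t ^ (-p) := by norm_num
  rw [e2]
  set E := Real.exp (-c * t ^ p)
  field_simp
  linear_combination (E * c * p) * e1

lemma aux_tend_g {c p : ℝ} (hc : 0 < c) (hp : 0 < p) :
    Tendsto (fun x : ℝ => Real.exp (-c * x ^ p) * x ^ (1 - p) / (c * p)) atTop (𝓝 0) := by
  have t1 : Tendsto (fun u : ℝ => u ^ ((1 - p) / p) * Real.exp (-c * u)) atTop (𝓝 0) :=
    tendsto_rpow_mul_exp_neg_mul_atTop_nhds_zero _ c hc
  have t2 : Tendsto (fun x : ℝ => x ^ p) atTop atTop := tendsto_rpow_atTop hp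
  have t3 := (t1.comp t2).div_const (c * p)
  have : (fun x : ℝ => Real.exp (-c * x ^ p) * x ^ (1 - p) / (c * p)) =ᶠ[atTop]
      (fun u : ℝ => u ^ ((1 - p) / p) * Real.exp (-c * u)) ∘ (fun x : ℝ => x ^ p) / (fun _ => c * p) := by
    filter_upwards [eventually_gt_atTop (0 : ℝ)] with x hx
    have : (x ^ p) ^ ((1 - p) / p) = x ^ (1 - p) := by
      rw [← Real.rpow_mul hx.le]; congr 1; field_simp
    simp only [Function.comp, Pi.div_apply, this, mul_comm]
  rw [show (0 : ℝ) = 0 / (c * p) by simp] at t3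
  exact Tendsto.congr' this.symm (by rw [zero_div, zero_div] at t3; exact t3)

lemma aux_key {c p : ℝ} (hc : 0 < c) (hp : 0 < p) :
    Tendsto (fun x : ℝ => (Real.exp (-c * x ^ p) * x ^ (1 - p) / (c * p)) /
      ∫ t in Ioi x, Real.exp (-c * t ^ p)) atTop (𝓝 1) := by
  set a : ℝ := (p - 1) / (c * p) with ha
  set g : ℝ → ℝ := fun x => Real.exp (-c * x ^ p) * x ^ (1 - p) / (c * p) with hg
  set φ : ℝ → ℝ := fun x => ∫ t in Ioi x, Real.exp (-c * t ^ p) with hφ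
  set I : ℝ → ℝ := fun x => ∫ t in Ioi x, t ^ (-p) * Real.exp (-c * t ^ p) with hI
  have key : ∀ x : ℝ, 0 < x → g x = φ x + a * I x := by
    intro x hx
    have hd : ∀ t ∈ Ici x, HasDerivAt g
        (-(Real.exp (-c * t ^ p) + a * (t ^ (-p) * Real.exp (-c * t ^ p)))) t :=
      fun t ht => aux_deriv hc hp (lt_of_lt_of_le hx ht)
    have hint : IntegrableOn
        (fun t : ℝ => -(Real.exp (-c * t ^ p) + a * (t ^ (-p) * Real.exp (-c * t ^ p))))
        (Ioi x) := ((aux_intf hc hp hx).add ((aux_inth hc hp hx).const_mul _)).neg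
    have h2 := integral_Ioi_of_hasDerivAt_of_tendsto' hd hint (aux_tend_g hc hp)
    rw [integral_neg, integral_add (aux_intf hc hp hx) ((aux_inth hc hp hx).const_mul _),
      integral_const_mul] at h2
    have : -(φ x + a * I x) = 0 - g x := h2
    linarith
  have hφpos : ∀ x : ℝ, 0 < x → 0 < φ x := fun x hx => aux_phi_pos hc hp hx
  have hInn : ∀ x : ℝ, 0 < x → 0 ≤ I x := by
    intro x hx
    exact setIntegral_nonneg measurableSet_Ioi fun t ht =>
      mul_nonneg (Real.rpow_nonneg (le_of_lt (lt_trans hx ht)) _) (Real.exp_pos _).le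
  have hIub : ∀ x : ℝ, 0 < x → I x ≤ x ^ (-p) * φ x := by
    intro x hx
    have : I x ≤ ∫ t in Ioi x, x ^ (-p) * Real.exp (-c * t ^ p) := by
      refine setIntegral_mono_on (aux_inth hc hp hx) ((aux_intf hc hp hx).const_mul _)
        measurableSet_Ioi fun t ht => ?_
      exact mul_le_mul_of_nonneg_right
        (Real.rpow_le_rpow_of_nonpos hx (le_of_lt ht) (by linarith)) (Real.exp_pos _).le
    rwa [integral_const_mul] at this
  have hratio : Tendsto (fun x : ℝ => I x / φ x) atTop (𝓝 0) := by
    refine tendsto_of_tendsto_of_tendsto_of_le_of_le' tendsto_const_nhds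
      (tendsto_rpow_neg_atTop hp) ?_ ?_
    · filter_upwards [eventually_gt_atTop (0 : ℝ)] with x hx
      exact div_nonneg (hInn x hx) (hφpos x hx).le
    · filter_upwards [eventually_gt_atTop (0 : ℝ)] with x hx
      rw [div_le_iff₀ (hφpos x hx)]
      linarith [hIub x hx, mul_comm (φ x) (x ^ (-p))]
  have heq : (fun x : ℝ => g x / φ x) =ᶠ[atTop] fun x => 1 + a * (I x / φ x) := by
    filter_upwards [eventually_gt_atTop (0 : ℝ)] with x hx
    rw [key x hx]
    field_simp [(hφpos x hx).ne']
  have : Tendsto (fun x : ℝ => 1 + a * (I x / φ x)) atTop (𝓝 (1 + a * 0)) :=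
    tendsto_const_nhds.add (hratio.const_mul a)
  rw [show (1 : ℝ) + a * 0 = 1 by ring] at this
  exact Tendsto.congr' heq.symm this

/-- For `γ > -1`, `b > 0`, `σ ∈ (0,1)`, with `φ(x) = ∫_x^∞ exp(-(2b/(1+γ)) t^{1+γ}) dt`:
`φ(x)/φ(σx) ∼ σ^γ exp(-(2b/(1+γ))(1-σ^{1+γ}) x^{1+γ})` as `x → ∞`. -/
theorem stmt_13 (γ b σ : ℝ) (hγ : -1 < γ) (hb : 0 < b) (hσ : σ ∈ Set.Ioo (0 : ℝ) 1)
    (φ : ℝ → ℝ)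
    (hφ : φ = fun x => ∫ t in Ioi x, Real.exp (-(2 * b / (1 + γ)) * t ^ (1 + γ))) :
    Tendsto (fun x : ℝ =>
        φ x / (φ (σ * x) * σ ^ γ *
          Real.exp (-(2 * b / (1 + γ)) * (1 - σ ^ (1 + γ)) * x ^ (1 + γ))))
      atTop (nhds 1) := by
  subst hφ
  obtain ⟨hσ0, hσ1⟩ := hσ
  have hp0 : (0 : ℝ) < 1 + γ := by linarith
  have hc0 : (0 : ℝ) < 2 * b / (1 + γ) := div_pos (by linarith) hp0
  set c : ℝ := 2 * b / (1 + γ) with hcdef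
  set p : ℝ := 1 + γ with hpdef
  set g : ℝ → ℝ := fun x => Real.exp (-c * x ^ p) * x ^ (1 - p) / (c * p) with hg
  set Φ : ℝ → ℝ := fun x => ∫ t in Ioi x, Real.exp (-c * t ^ p) with hΦ
  have hk : Tendsto (fun x : ℝ => g x / Φ x) atTop (𝓝 1) := aux_key hc0 hp0
  clear_value c p g Φ
  have L1 : Tendsto (fun x : ℝ => Φ x / g x) atTop (𝓝 1) := by
    have := hk.inv₀ one_ne_zero
    simpa [inv_div] using this
  have hσx : Tendsto (fun x : ℝ => σ * x) atTop atTop := tendsto_id.const_mul_atTop hσ0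
  have L2 : Tendsto (fun x : ℝ => g (σ * x) / Φ (σ * x)) atTop (𝓝 1) := hk.comp hσx
  have L := L1.mul L2
  rw [show (1 : ℝ) * 1 = 1 by ring] at L
  refine Tendsto.congr' ?_ L
  filter_upwards [eventually_gt_atTop (0 : ℝ)] with x hx
  have hσx0 : 0 < σ * x := mul_pos hσ0 hx
  have hgpos : ∀ y : ℝ, 0 < y → 0 < g y := by
    intro y hy
    simp only [hg]
    have h1 : 0 < Real.exp (-c * y ^ p) := Real.exp_pos _
    have h2 : 0 < y ^ (1 - p) := Real.rpow_pos_of_pos hy _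
    have h3 : 0 < c * p := mul_pos hc0 hp0
    positivity
  have hΦx : 0 < Φ x := by rw [hΦ]; exact aux_phi_pos hc0 hp0 hx
  have hΦσ : 0 < Φ (σ * x) := by rw [hΦ]; exact aux_phi_pos hc0 hp0 hσx0
  have hgx : 0 < g x := hgpos x hx
  have hgσ : 0 < g (σ * x) := hgpos _ hσx0
  have hrel : g x = σ ^ γ * Real.exp (-c * (1 - σ ^ p) * x ^ p) * g (σ * x) := by
    have e2 : σ ^ γ * σ ^ (1 - p) = 1 := by
      rw [← Real.rpow_add hσ0]
      rw [show γ + (1 - p) = 0 by rw [hpdef]; ring, Real.rpow_zero]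
    have e3 : Real.exp (-c * (1 - σ ^ p) * x ^ p) * Real.exp (-c * (σ ^ p * x ^ p)) =
        Real.exp (-c * x ^ p) := by
      rw [← Real.exp_add]; congr 1; ring
    simp only [hg]
    rw [Real.mul_rpow hσ0.le hx.le, Real.mul_rpow hσ0.le hx.le, ← e3]
    linear_combination (-(Real.exp (-c * (1 - σ ^ p) * x ^ p)) *
      Real.exp (-c * (σ ^ p * x ^ p)) * x ^ (1 - p) / (c * p)) * e2
  show Φ x / g x * (g (σ * x) / Φ (σ * x)) =
    Φ x / (Φ (σ * x) * σ ^ γ * Real.exp (-c * (1 - σ ^ p) * x ^ p))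
  rw [hrel]
  have hE : 0 < Real.exp (-c * (1 - σ ^ p) * x ^ p) := Real.exp_pos _
  have hσγ : 0 < σ ^ γ := Real.rpow_pos_of_pos hσ0 _
  field_simp
end

section
/- Let γ > −1 and b, c > 0, set κ = 2bc^{1+γ}/(1+γ), and let M > 1. For positive integers j define D_j = D for some fixed D > 0 if γ ≥ 0, and D_j = b c^{γ} (j+1)^{γ/(1+γ)} if γ ∈ (−1, 0). If either κ < 1, or κ = 1 and γ ≥ −1/2, then the series ∑_{j=2}^∞ exp(−(D_j²/2) e^{j} + j^{−1/(1+γ)} (log j)^{−1} e^{κ j} log(2M)) converges. -/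
open Real Filter

lemma aux_tendsto (a p α L κ : ℝ) (ha : 0 < a) (hp : p ≤ 0) (hα : 0 < α)
    (hL : 0 < L) (hκ : 0 < κ)
    (hcase : κ < 1 ∨ (κ = 1 ∧ -α - p ≤ 0)) :
    Tendsto (fun t : ℝ => -(a * t ^ p * Real.exp t) +
      L * t ^ (-α) * (Real.log t)⁻¹ * Real.exp (κ * t) + t) atTop atBot := by
  have stepA : ∀ᶠ t : ℝ in atTop,
      L * t ^ (-α) * (Real.log t)⁻¹ * Real.exp (κ * t) ≤ a / 2 * (t ^ p * Real.exp t) := by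
    rcases hcase with hlt | ⟨heq, hαp⟩
    · -- κ < 1
      have h1 : Tendsto (fun t : ℝ => t ^ (-p) * Real.exp (-(1 - κ) * t)) atTop (nhds 0) :=
        tendsto_rpow_mul_exp_neg_mul_atTop_nhds_zero (-p) (1 - κ) (by linarith)
      have h2 : ∀ᶠ t : ℝ in atTop, t ^ (-p) * Real.exp (-(1 - κ) * t) ≤ a / (2 * L) := by
        have := h1.eventually_le_const (show (0:ℝ) < a / (2 * L) by positivity)
        exact this
      filter_upwards [h2, eventually_ge_atTop (Real.exp 1)] with t h2 ht
      have ht1 : (1:ℝ) ≤ t := le_trans (by nlinarith [Real.add_one_le_exp (1:ℝ)]) ht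
      have ht0 : (0:ℝ) < t := by linarith
      have hlog : (1:ℝ) ≤ Real.log t := by
        rw [show (1:ℝ) = Real.log (Real.exp 1) by simp]
        exact Real.log_le_log (Real.exp_pos 1) ht
      have hb1 : t ^ (-α) ≤ 1 := Real.rpow_le_one_of_one_le_of_nonpos ht1 (by linarith)
      have hb2 : (Real.log t)⁻¹ ≤ 1 := by
        rw [inv_le_one_iff₀]; right; exact hlog
      have hb0 : 0 < (Real.log t)⁻¹ := by positivity
      have step1 : L * t ^ (-α) * (Real.log t)⁻¹ * Real.exp (κ * t) ≤ L * Real.exp (κ * t) := by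
        have : L * t ^ (-α) * (Real.log t)⁻¹ ≤ L := by
          calc L * t ^ (-α) * (Real.log t)⁻¹ ≤ L * 1 * 1 := by
                apply mul_le_mul (mul_le_mul le_rfl hb1 (by positivity) hL.le) hb2 hb0.le
                positivity
            _ = L := by ring
        exact mul_le_mul_of_nonneg_right this (Real.exp_pos _).le
      have step2 : L * Real.exp (κ * t) ≤ a / 2 * (t ^ p * Real.exp t) := by
        have key : L * (t ^ (-p) * Real.exp (-(1 - κ) * t)) ≤ a / 2 := by
          calc L * (t ^ (-p) * Real.exp (-(1 - κ) * t)) ≤ L * (a / (2 * L)) :=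
                mul_le_mul_of_nonneg_left h2 hL.le
            _ = a / 2 := by field_simp
        have e1 : t ^ (-p) * t ^ p = 1 := by
          rw [← Real.rpow_add ht0]; norm_num
        have e2 : Real.exp (-(1 - κ) * t) * Real.exp t = Real.exp (κ * t) := by
          rw [← Real.exp_add]; congr 1; ring
        have hid : L * Real.exp (κ * t) =
            (L * (t ^ (-p) * Real.exp (-(1 - κ) * t))) * (t ^ p * Real.exp t) := by
          rw [show (L * (t ^ (-p) * Real.exp (-(1 - κ) * t))) * (t ^ p * Real.exp t)
            = L * ((t ^ (-p) * t ^ p) * (Real.exp (-(1 - κ) * t) * Real.exp t)) from by ring,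
            e1, e2]; ring
        rw [hid]
        exact mul_le_mul_of_nonneg_right key (by positivity)
      exact step1.trans step2
    · -- κ = 1
      subst heq
      have h1 : Tendsto (fun t : ℝ => L * (Real.log t)⁻¹) atTop (nhds 0) := by
        simpa using (Real.tendsto_log_atTop.inv_tendsto_atTop).const_mul L
      have h2 : ∀ᶠ t : ℝ in atTop, L * (Real.log t)⁻¹ ≤ a / 2 := by
        simpa using h1.eventually_le_const (show (0:ℝ) < a / 2 by positivity)
      filter_upwards [h2, eventually_ge_atTop (Real.exp 1)] with t h2 ht
      have ht1 : (1:ℝ) ≤ t := le_trans (by nlinarith [Real.add_one_le_exp (1:ℝ)]) ht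
      have ht0 : (0:ℝ) < t := by linarith
      have hlog : (0:ℝ) < Real.log t := Real.log_pos (by nlinarith [Real.add_one_le_exp (1:ℝ)])
      have hb1 : t ^ (-α - p) ≤ 1 := Real.rpow_le_one_of_one_le_of_nonpos ht1 hαp
      have e1 : t ^ (-α - p) * t ^ p = t ^ (-α) := by
        rw [← Real.rpow_add ht0]; congr 1; ring
      have hid : L * t ^ (-α) * (Real.log t)⁻¹ * Real.exp (1 * t) =
          (L * (Real.log t)⁻¹) * t ^ (-α - p) * (t ^ p * Real.exp t) := by
        rw [one_mul, show (L * (Real.log t)⁻¹) * t ^ (-α - p) * (t ^ p * Real.exp t)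
          = L * (Real.log t)⁻¹ * (t ^ (-α - p) * t ^ p) * Real.exp t from by ring, e1]
        ring
      rw [hid]
      have : (L * (Real.log t)⁻¹) * t ^ (-α - p) ≤ a / 2 := by
        calc (L * (Real.log t)⁻¹) * t ^ (-α - p) ≤ (L * (Real.log t)⁻¹) * 1 :=
              mul_le_mul_of_nonneg_left hb1 (by positivity)
          _ ≤ a / 2 := by rw [mul_one]; exact h2
      exact mul_le_mul_of_nonneg_right this (by positivity)
  -- step B
  have stepB : Tendsto (fun t : ℝ => -(a / 2 * (t ^ p * Real.exp t)) + t) atTop atBot := by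
    have h1 : Tendsto (fun t : ℝ => a / 2 * (Real.exp t / t ^ (1 - p)) - 1) atTop atTop := by
      apply tendsto_atTop_add_const_right
      exact (tendsto_exp_div_rpow_atTop (1 - p)).const_mul_atTop (by positivity)
    have h2 : Tendsto (fun t : ℝ => t * (a / 2 * (Real.exp t / t ^ (1 - p)) - 1)) atTop atTop :=
      tendsto_id.atTop_mul_atTop₀ h1
    have h3 : Tendsto (fun t : ℝ => -(t * (a / 2 * (Real.exp t / t ^ (1 - p)) - 1)))
        atTop atBot := tendsto_neg_atBot_iff.2 h2
    apply h3.congr'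
    filter_upwards [eventually_gt_atTop (0:ℝ)] with t ht0
    have hne : t ^ (1 - p) ≠ 0 := (Real.rpow_pos_of_pos ht0 _).ne'
    have e : t ^ (1 - p) * t ^ p = t := by
      rw [← Real.rpow_add ht0]; norm_num
    field_simp
    linear_combination (a * Real.exp t) * e
  apply tendsto_atBot_mono' _ _ stepB
  filter_upwards [stepA] with t hA
  nlinarith [hA]

/-- For `γ > -1`, `b, c > 0`, `κ = 2bc^{1+γ}/(1+γ)`, `M > 1`, with `D_j = D > 0` if
`γ ≥ 0` and `D_j = b c^γ (j+1)^{γ/(1+γ)}` if `γ ∈ (-1,0)`: if `κ < 1`, or `κ = 1` and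
`γ ≥ -1/2`, then `∑_{j=2}^∞ exp(-(D_j²/2) e^j + j^{-1/(1+γ)} (log j)^{-1} e^{κj} log(2M))`
converges. -/
theorem stmt_14 (γ b c D M : ℝ) (hγ : -1 < γ) (hb : 0 < b) (hc : 0 < c)
    (hD : 0 < D) (hM : 1 < M)
    (κ : ℝ) (hκ : κ = 2 * b * c ^ (1 + γ) / (1 + γ))
    (Dj : ℕ → ℝ)
    (hDj : Dj = fun j : ℕ =>
      if 0 ≤ γ then D else b * c ^ γ * ((j : ℝ) + 1) ^ (γ / (1 + γ)))
    (hcond : κ < 1 ∨ (κ = 1 ∧ -1/2 ≤ γ)) :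
    Summable (fun j : ℕ =>
      Real.exp (-(Dj (j + 2)) ^ 2 / 2 * Real.exp ((j : ℝ) + 2) +
        ((j : ℝ) + 2) ^ (-(1 / (1 + γ))) * (Real.log ((j : ℝ) + 2))⁻¹ *
          Real.exp (κ * ((j : ℝ) + 2)) * Real.log (2 * M))) := by
  have h1γ : 0 < 1 + γ := by linarith
  have hκpos : 0 < κ := by
    rw [hκ]
    have : (0:ℝ) < c ^ (1 + γ) := Real.rpow_pos_of_pos hc _
    positivity
  set α : ℝ := 1 / (1 + γ) with hαdef
  have hα : 0 < α := by positivity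
  set L : ℝ := Real.log (2 * M) with hLdef
  have hL : 0 < L := Real.log_pos (by linarith)
  set p : ℝ := if 0 ≤ γ then 0 else 2 * γ / (1 + γ) with hpdef
  set a : ℝ := if 0 ≤ γ then D ^ 2 / 2 else (b * c ^ γ) ^ 2 / 2 * 2 ^ p with hadef
  have hp : p ≤ 0 := by
    rw [hpdef]; split
    · exact le_refl 0
    · next h => apply div_nonpos_of_nonpos_of_nonneg <;> linarith [not_le.1 h]
  have ha : 0 < a := by
    rw [hadef]; split
    · positivity
    · have h1 : (0:ℝ) < c ^ γ := Real.rpow_pos_of_pos hc _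
      have h2 : (0:ℝ) < (2:ℝ) ^ p := Real.rpow_pos_of_pos two_pos _
      positivity
  have hA : ∀ j : ℕ, a * ((j:ℝ) + 2) ^ p ≤ (Dj (j + 2)) ^ 2 / 2 := by
    intro j
    rw [hDj]
    simp only
    by_cases hγ0 : 0 ≤ γ
    · rw [if_pos hγ0, hadef, hpdef, if_pos hγ0, if_pos hγ0, Real.rpow_zero, mul_one]
    · rw [if_neg hγ0, hadef, hpdef, if_neg hγ0, if_neg hγ0]
      have hx2 : (0:ℝ) < (j:ℝ) + 2 := by positivity
      have hx3 : (0:ℝ) < ((j + 2 : ℕ) : ℝ) + 1 := by positivity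
      have hcγ : (0:ℝ) < c ^ γ := Real.rpow_pos_of_pos hc _
      have e1 : (b * c ^ γ * (((j + 2 : ℕ) : ℝ) + 1) ^ (γ / (1 + γ))) ^ 2 / 2
          = (b * c ^ γ) ^ 2 / 2 * (((j + 2 : ℕ) : ℝ) + 1) ^ (2 * γ / (1 + γ)) := by
        rw [mul_pow, sq ((((j + 2 : ℕ) : ℝ) + 1) ^ (γ / (1 + γ))), ← Real.rpow_add hx3]
        rw [show γ / (1 + γ) + γ / (1 + γ) = 2 * γ / (1 + γ) by ring]
        ring
      rw [e1]
      have e2 : (2:ℝ) ^ (2 * γ / (1 + γ)) * ((j:ℝ) + 2) ^ (2 * γ / (1 + γ))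
          ≤ (((j + 2 : ℕ) : ℝ) + 1) ^ (2 * γ / (1 + γ)) := by
        rw [← Real.mul_rpow (by norm_num) hx2.le]
        apply Real.rpow_le_rpow_of_nonpos hx3
        · push_cast; linarith
        · rw [hpdef, if_neg hγ0] at hp; exact hp
      calc (b * c ^ γ) ^ 2 / 2 * 2 ^ (2 * γ / (1 + γ)) * ((j:ℝ) + 2) ^ (2 * γ / (1 + γ))
          = (b * c ^ γ) ^ 2 / 2 * ((2:ℝ) ^ (2 * γ / (1 + γ)) * ((j:ℝ) + 2) ^ (2 * γ / (1 + γ))) := by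
            ring
        _ ≤ (b * c ^ γ) ^ 2 / 2 * (((j + 2 : ℕ) : ℝ) + 1) ^ (2 * γ / (1 + γ)) := by
            apply mul_le_mul_of_nonneg_left e2 (by positivity)
  have hcase : κ < 1 ∨ (κ = 1 ∧ -α - p ≤ 0) := by
    rcases hcond with h | ⟨h, hγ2⟩
    · exact Or.inl h
    · refine Or.inr ⟨h, ?_⟩
      by_cases hγ0 : 0 ≤ γ
      · rw [hpdef, if_pos hγ0]; linarith
      · have : -α - p = (-1 - 2 * γ) / (1 + γ) := by
          rw [hαdef, hpdef, if_neg hγ0]; field_simp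
        rw [this]
        apply div_nonpos_of_nonpos_of_nonneg <;> linarith
  have hx : Tendsto (fun j : ℕ => ((j:ℝ) + 2)) atTop atTop :=
    tendsto_atTop_add_const_right _ _ tendsto_natCast_atTop_atTop
  have hG := (aux_tendsto a p α L κ ha hp hα hL hκpos hcase).comp hx
  have key : ∀ j : ℕ,
      (-(Dj (j + 2)) ^ 2 / 2 * Real.exp ((j : ℝ) + 2) +
        ((j : ℝ) + 2) ^ (-α) * (Real.log ((j : ℝ) + 2))⁻¹ *
          Real.exp (κ * ((j : ℝ) + 2)) * L) + ((j:ℝ) + 2) ≤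
      (-(a * ((j:ℝ) + 2) ^ p * Real.exp ((j:ℝ) + 2)) +
        L * ((j:ℝ) + 2) ^ (-α) * (Real.log ((j:ℝ) + 2))⁻¹ *
          Real.exp (κ * ((j:ℝ) + 2)) + ((j:ℝ) + 2)) := by
    intro j
    have h1 := mul_le_mul_of_nonneg_right (hA j) (Real.exp_pos ((j:ℝ) + 2)).le
    have e2 : ((j:ℝ) + 2) ^ (-α) * (Real.log ((j:ℝ) + 2))⁻¹ *
          Real.exp (κ * ((j:ℝ) + 2)) * L =
        L * ((j:ℝ) + 2) ^ (-α) * (Real.log ((j:ℝ) + 2))⁻¹ *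
          Real.exp (κ * ((j:ℝ) + 2)) := by ring
    nlinarith [h1, e2]
  have hE : Tendsto (fun j : ℕ =>
      (-(Dj (j + 2)) ^ 2 / 2 * Real.exp ((j : ℝ) + 2) +
        ((j : ℝ) + 2) ^ (-α) * (Real.log ((j : ℝ) + 2))⁻¹ *
          Real.exp (κ * ((j : ℝ) + 2)) * L) + ((j:ℝ) + 2)) atTop atBot :=
    tendsto_atBot_mono key hG
  have hEv : ∀ᶠ j : ℕ in atTop,
      -(Dj (j + 2)) ^ 2 / 2 * Real.exp ((j : ℝ) + 2) +
        ((j : ℝ) + 2) ^ (-α) * (Real.log ((j : ℝ) + 2))⁻¹ *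
          Real.exp (κ * ((j : ℝ) + 2)) * L ≤ -(j:ℝ) := by
    filter_upwards [hE.eventually_le_atBot 2] with j hj
    linarith
  apply summable_of_isBigO_nat Real.summable_exp_neg_nat
  apply Asymptotics.IsBigO.of_bound 1
  filter_upwards [hEv] with j hj
  rw [one_mul, Real.norm_eq_abs, Real.norm_eq_abs, abs_of_pos (Real.exp_pos _),
    abs_of_pos (Real.exp_pos _)]
  exact Real.exp_le_exp.2 hj
end
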